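/- For all complex numbers x and t, e^{x(e^t − 1)} = Σ_{n=0}^{∞} φ_n(x) t^n / n!, where φ_n(x) = Σ_{k=0}^{n} S(n,k) x^k is the n-th exponential polynomial and the series converges absolutely. -/

import Mathlib

open Finset

/-- The Stirling number of the second kind `S(m,n)`, defined (as a complex number) by
`n! * S(m,n) = ∑ k ∈ range (n+1), (-1)^(n-k) * C(n,k) * k^m` (with `(0:ℂ)^0 = 1`). -/
noncomputable def stirling2 (m n : ℕ) : ℂ :=
  (n.factorial : ℂ)⁻¹ *
    ∑ k ∈ range (n + 1), (-1) ^ (n - k) * (n.choose k : ℂ) * (k : ℂ) ^ m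

/-- The `n`-th exponential polynomial `φ_n(x) = ∑ k ∈ range (n+1), S(n,k) x^k`. -/
noncomputable def expPoly (n : ℕ) (x : ℂ) : ℂ :=
  ∑ k ∈ range (n + 1), stirling2 n k * x ^ k

lemma diff_step (k : ℕ) (p : ℕ → ℂ) :
    ∑ j ∈ range (k + 2), (-1 : ℂ) ^ (k + 1 - j) * ((k + 1).choose j : ℂ) * p j
      = ∑ j ∈ range (k + 1), (-1 : ℂ) ^ (k - j) * (k.choose j : ℂ) * (p (j + 1) - p j) := by
  have hR : ∑ j ∈ range (k + 1), (-1 : ℂ) ^ (k - j) * (k.choose j : ℂ) * (p (j + 1) - p j)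
      = ∑ j ∈ range (k + 1), (-1 : ℂ) ^ (k - j) * (k.choose j : ℂ) * p (j + 1)
        - ∑ j ∈ range (k + 1), (-1 : ℂ) ^ (k - j) * (k.choose j : ℂ) * p j := by
    rw [← Finset.sum_sub_distrib]; exact Finset.sum_congr rfl fun j _ => by ring
  have hL : ∑ j ∈ range (k + 2), (-1 : ℂ) ^ (k + 1 - j) * ((k + 1).choose j : ℂ) * p j
      = ∑ i ∈ range (k + 1), (-1 : ℂ) ^ (k - i) * (k.choose i : ℂ) * p (i + 1)
        + (∑ i ∈ range (k + 1), (-1 : ℂ) ^ (k - i) * (k.choose (i + 1) : ℂ) * p (i + 1)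
           + (-1 : ℂ) ^ (k + 1) * p 0) := by
    rw [Finset.sum_range_succ']
    rw [← add_assoc, ← Finset.sum_add_distrib]
    congr 1
    · refine Finset.sum_congr rfl fun i _ => ?_
      rw [Nat.succ_sub_succ, Nat.choose_succ_succ]
      push_cast
      ring
    · simp
  rw [hL, hR]
  have hK : ∑ i ∈ range (k + 1), (-1 : ℂ) ^ (k - i) * (k.choose (i + 1) : ℂ) * p (i + 1)
        + (-1 : ℂ) ^ (k + 1) * p 0
      = - ∑ j ∈ range (k + 1), (-1 : ℂ) ^ (k - j) * (k.choose j : ℂ) * p j := by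
    rw [Finset.sum_range_succ' (fun j => (-1 : ℂ) ^ (k - j) * (k.choose j : ℂ) * p j)]
    rw [Finset.sum_range_succ]
    have h1 : (k.choose (k + 1) : ℂ) = 0 := by
      simp [Nat.choose_eq_zero_of_lt]
    rw [h1]
    rw [neg_add]
    congr 1
    · rw [← Finset.sum_neg_distrib]
      simp only [mul_zero, zero_mul, add_zero]
      refine Finset.sum_congr rfl fun i hi => ?_
      rw [Finset.mem_range] at hi
      have : k - i = (k - (i + 1)) + 1 := by omega
      rw [this, pow_succ]
      ring
    · simp [pow_succ]
  rw [hK]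
  ring

lemma alt_sum_pow_eq_zero : ∀ n k : ℕ, n < k →
    ∑ j ∈ range (k + 1), (-1 : ℂ) ^ (k - j) * (k.choose j : ℂ) * (j : ℂ) ^ n = 0 := by
  intro n
  induction n using Nat.strong_induction_on with
  | _ n ih =>
    intro k hk
    obtain ⟨m, rfl⟩ : ∃ m, k = m + 1 := ⟨k - 1, by omega⟩
    have := diff_step m (fun j => (j : ℂ) ^ n)
    rw [show m + 1 + 1 = m + 2 from rfl] at this
    rw [this]
    have key : ∀ j : ℕ, ((j + 1 : ℕ) : ℂ) ^ n - (j : ℂ) ^ n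
        = ∑ i ∈ range n, (j : ℂ) ^ i * (n.choose i : ℂ) := by
      intro j
      push_cast
      rw [add_pow, Finset.sum_range_succ]
      simp [add_sub_cancel_right]
    calc ∑ j ∈ range (m + 1), (-1 : ℂ) ^ (m - j) * (m.choose j : ℂ)
            * (((j + 1 : ℕ) : ℂ) ^ n - (j : ℂ) ^ n)
        = ∑ i ∈ range n, (n.choose i : ℂ)
            * ∑ j ∈ range (m + 1), (-1 : ℂ) ^ (m - j) * (m.choose j : ℂ) * (j : ℂ) ^ i := by
          simp only [key, Finset.mul_sum]
          rw [Finset.sum_comm]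
          refine Finset.sum_congr rfl fun i _ => ?_
          exact Finset.sum_congr rfl fun j _ => by ring
      _ = 0 := by
          refine Finset.sum_eq_zero fun i hi => ?_
          rw [Finset.mem_range] at hi
          rw [ih i hi m (by omega), mul_zero]

lemma stirling2_eq_zero {n k : ℕ} (h : n < k) : stirling2 n k = 0 := by
  rw [stirling2, alt_sum_pow_eq_zero n k h, mul_zero]

noncomputable def F (x t : ℂ) (p : ℕ × ℕ × ℕ) : ℂ :=
  (-1) ^ (p.2.1 - p.2.2) * (p.2.1.choose p.2.2 : ℂ) * (p.2.2 : ℂ) ^ p.1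
    * x ^ p.2.1 / (p.2.1.factorial : ℂ) * t ^ p.1 / (p.1.factorial : ℂ)

lemma normF (x t : ℂ) (n k j : ℕ) : ‖F x t (n, k, j)‖
    = (k.choose j : ℝ) * ‖x‖ ^ k / k.factorial * ((j : ℝ) * ‖t‖) ^ n / n.factorial := by
  simp only [F, norm_div, norm_mul, norm_pow, norm_neg, norm_one, one_pow,
    Complex.norm_natCast, mul_pow]
  ring

lemma hasSum_exp_div (z : ℂ) :
    HasSum (fun n : ℕ => z ^ n / (n.factorial : ℂ)) (Complex.exp z) := by
  rw [Complex.exp_eq_exp_ℂ]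
  exact NormedSpace.expSeries_div_hasSum_exp z

lemma hasSum_rexp_div (y : ℝ) :
    HasSum (fun n : ℕ => y ^ n / (n.factorial : ℝ)) (Real.exp y) := by
  rw [Real.exp_eq_exp_ℝ]
  exact NormedSpace.expSeries_div_hasSum_exp y

def eKJN : (ℕ × ℕ × ℕ) ≃ (ℕ × ℕ × ℕ) where
  toFun q := (q.2.2, q.1, q.2.1)
  invFun p := (p.2.1, p.2.2, p.1)
  left_inv q := rfl
  right_inv p := rfl

lemma normF_summable (x t : ℂ) : Summable fun p : ℕ × ℕ × ℕ => ‖F x t p‖ := by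
  set E := Real.exp ‖t‖ with hE
  -- summability over n for fixed (k, j)
  have h1 : ∀ k j : ℕ, Summable fun n => ‖F x t (n, k, j)‖ := by
    intro k j
    refine ((Real.summable_pow_div_factorial ((j : ℝ) * ‖t‖)).mul_left
      ((k.choose j : ℝ) * ‖x‖ ^ k / k.factorial)).congr fun n => ?_
    rw [normF]; ring
  have h1t : ∀ k j : ℕ, ∑' n, ‖F x t (n, k, j)‖
      = (k.choose j : ℝ) * ‖x‖ ^ k / k.factorial * Real.exp ((j : ℝ) * ‖t‖) := by
    intro k j
    rw [← ((hasSum_rexp_div ((j : ℝ) * ‖t‖)).mul_left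
      ((k.choose j : ℝ) * ‖x‖ ^ k / k.factorial)).tsum_eq]
    exact tsum_congr fun n => by rw [normF]; ring
  have hzero : ∀ k j, k < j → ∀ n, ‖F x t (n, k, j)‖ = 0 := by
    intro k j hkj n
    rw [normF, Nat.choose_eq_zero_of_lt hkj]
    simp
  -- summability over (j, n) for fixed k
  have h2 : ∀ k, Summable fun q : ℕ × ℕ => ‖F x t (q.2, k, q.1)‖ := by
    intro k
    rw [summable_prod_of_nonneg (fun q => norm_nonneg _)]
    refine ⟨fun j => h1 k j, ?_⟩
    apply summable_of_ne_finset_zero (s := range (k + 1))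
    intro j hj
    rw [mem_range, not_lt] at hj
    have : ∀ n, ‖F x t (n, k, j)‖ = 0 := hzero k j (by omega)
    simp [this]
  -- value of the (j, n) tsum
  have h2t : ∀ k, ∑' q : ℕ × ℕ, ‖F x t (q.2, k, q.1)‖
      = (‖x‖ * (E + 1)) ^ k / k.factorial := by
    intro k
    rw [Summable.tsum_prod (h2 k)]
    have : ∀ j, ∑' n, ‖F x t (n, k, j)‖
        = (k.choose j : ℝ) * ‖x‖ ^ k / k.factorial * Real.exp ((j : ℝ) * ‖t‖) := h1t k
    rw [tsum_congr this]
    rw [tsum_eq_sum (s := range (k + 1)) (fun j hj => by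
      rw [mem_range, not_lt] at hj
      rw [Nat.choose_eq_zero_of_lt (by omega)]
      simp)]
    have hexp : ∀ j : ℕ, Real.exp ((j : ℝ) * ‖t‖) = E ^ j := fun j => by
      rw [hE, ← Real.exp_nat_mul]
    rw [Finset.sum_congr rfl fun j _ => by rw [hexp j]]
    have := add_pow E 1 k
    rw [mul_pow, this, Finset.mul_sum, Finset.sum_div]
    refine Finset.sum_congr rfl fun j _ => ?_
    simp only [one_pow, mul_one]
    ring
  -- total in (k, j, n) order
  have h3 : Summable fun q : ℕ × ℕ × ℕ => ‖F x t (q.2.2, q.1, q.2.1)‖ := by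
    rw [summable_prod_of_nonneg (fun q => norm_nonneg _)]
    refine ⟨fun k => h2 k, ?_⟩
    refine (Real.summable_pow_div_factorial (‖x‖ * (E + 1))).congr fun k => ?_
    rw [← h2t k]
  -- transfer along the equiv
  have := (eKJN.summable_iff (f := fun p : ℕ × ℕ × ℕ => ‖F x t p‖)).mp ?_
  · exact this
  · exact h3

/-- For all complex `x` and `t`, the series `∑ n, φ_n(x) t^n / n!` converges
absolutely and its sum is `e^{x(e^t - 1)}`. -/
theorem exponential_polynomial_generating_function (x t : ℂ) :
    Summable (fun n : ℕ => ‖expPoly n x * t ^ n / (n.factorial : ℂ)‖) ∧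
    HasSum (fun n : ℕ => expPoly n x * t ^ n / (n.factorial : ℂ))
      (Complex.exp (x * (Complex.exp t - 1))) := by
  have hnorm : Summable fun p : ℕ × ℕ × ℕ => ‖F x t p‖ := normF_summable x t
  have hf : Summable (F x t) := hnorm.of_norm
  -- sum over j for fixed (n, k)
  have hj : ∀ n k : ℕ, HasSum (fun j => F x t (n, k, j))
      (stirling2 n k * x ^ k * t ^ n / (n.factorial : ℂ)) := by
    intro n k
    have h0 : ∀ j ∉ range (k + 1), F x t (n, k, j) = 0 := by
      intro j hjm
      rw [mem_range, not_lt] at hjm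
      simp [F, Nat.choose_eq_zero_of_lt (show k < j by omega)]
    have := hasSum_sum_of_ne_finset_zero (L := SummationFilter.unconditional _) h0
    convert this using 1
    rw [stirling2, div_eq_mul_inv, Finset.mul_sum, Finset.sum_mul, Finset.sum_mul,
      Finset.sum_mul]
    refine (Finset.sum_congr rfl fun j _ => ?_).symm
    simp only [F]
    ring
  -- sum over k for fixed n
  have hk : ∀ n : ℕ, HasSum (fun k => stirling2 n k * x ^ k * t ^ n / (n.factorial : ℂ))
      (expPoly n x * t ^ n / (n.factorial : ℂ)) := by
    intro n
    have h0 : ∀ k ∉ range (n + 1),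
        stirling2 n k * x ^ k * t ^ n / (n.factorial : ℂ) = 0 := by
      intro k hkm
      rw [mem_range, not_lt] at hkm
      rw [stirling2_eq_zero (show n < k by omega)]
      simp
    have := hasSum_sum_of_ne_finset_zero (L := SummationFilter.unconditional _) h0
    convert this using 1
    rw [expPoly, Finset.sum_mul, Finset.sum_div]
  -- fiberwise sums over (k, j) for fixed n
  have hfib : ∀ n : ℕ, HasSum (fun q : ℕ × ℕ => F x t (n, q))
      (expPoly n x * t ^ n / (n.factorial : ℂ)) := by
    intro n
    have hs : Summable fun q : ℕ × ℕ => F x t (n, q) := hf.prod_factor n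
    have h1 := hs.hasSum
    have h2 := h1.prod_fiberwise (fun k => hj n k)
    rw [h2.unique (hk n)] at h1
    exact h1
  -- the total sum equals exp (x * (exp t - 1))
  have hG : HasSum (F x t ∘ eKJN) (∑' p, F x t p) := eKJN.hasSum_iff.mpr hf.hasSum
  have hn : ∀ k j : ℕ, HasSum (fun n => F x t (n, k, j))
      ((-1) ^ (k - j) * (k.choose j : ℂ) * x ^ k / (k.factorial : ℂ)
        * Complex.exp ((j : ℂ) * t)) := by
    intro k j
    refine ((hasSum_exp_div ((j : ℂ) * t)).mul_left
      ((-1) ^ (k - j) * (k.choose j : ℂ) * x ^ k / (k.factorial : ℂ))).congr_fun fun n => ?_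
    simp only [F, mul_pow]
    ring
  have hjval : ∀ k : ℕ, HasSum (fun j => (-1 : ℂ) ^ (k - j) * (k.choose j : ℂ) * x ^ k
      / (k.factorial : ℂ) * Complex.exp ((j : ℂ) * t))
      (x ^ k * (Complex.exp t - 1) ^ k / (k.factorial : ℂ)) := by
    intro k
    have h0 : ∀ j ∉ range (k + 1), (-1 : ℂ) ^ (k - j) * (k.choose j : ℂ) * x ^ k
        / (k.factorial : ℂ) * Complex.exp ((j : ℂ) * t) = 0 := by
      intro j hjm
      rw [mem_range, not_lt] at hjm
      simp [Nat.choose_eq_zero_of_lt (show k < j by omega)]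
    have := hasSum_sum_of_ne_finset_zero (L := SummationFilter.unconditional _) h0
    convert this using 1
    rw [sub_pow (Complex.exp t) 1 k, Finset.mul_sum, Finset.sum_div]
    refine Finset.sum_congr rfl fun j hjm => ?_
    rw [mem_range] at hjm
    have hsign : (-1 : ℂ) ^ (j + k) = (-1 : ℂ) ^ (k - j) := by
      have : j + k = (k - j) + 2 * j := by omega
      rw [this, pow_add, pow_mul]
      simp
    rw [hsign, Complex.exp_nat_mul]
    simp only [one_pow, mul_one]
    ring
  have hSexp : HasSum (F x t) (Complex.exp (x * (Complex.exp t - 1))) := by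
    have hkfib : ∀ k : ℕ, HasSum (fun q : ℕ × ℕ => (F x t ∘ eKJN) (k, q))
        (x ^ k * (Complex.exp t - 1) ^ k / (k.factorial : ℂ)) := by
      intro k
      have hs : Summable fun q : ℕ × ℕ => (F x t ∘ eKJN) (k, q) :=
        (eKJN.summable_iff.mpr hf).prod_factor k
      have h1 := hs.hasSum
      have h2 := h1.prod_fiberwise (fun j => hn k j)
      rw [h2.unique (hjval k)] at h1
      exact h1
    have h3 := hG.prod_fiberwise hkfib
    have h4 : HasSum (fun k : ℕ => (x * (Complex.exp t - 1)) ^ k / (k.factorial : ℂ))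
        (Complex.exp (x * (Complex.exp t - 1))) := hasSum_exp_div _
    have h5 : HasSum (fun k : ℕ => x ^ k * (Complex.exp t - 1) ^ k / (k.factorial : ℂ))
        (Complex.exp (x * (Complex.exp t - 1))) :=
      h4.congr_fun fun k => by rw [mul_pow]
    rw [h3.unique h5] at hG
    exact eKJN.hasSum_iff.mp hG
  refine ⟨?_, hSexp.prod_fiberwise hfib⟩
  -- absolute convergence
  have hnfib : Summable fun n : ℕ => ∑' q : ℕ × ℕ, ‖F x t (n, q)‖ :=
    (hnorm.hasSum.prod_fiberwise fun n => (hnorm.prod_factor n).hasSum).summable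
  refine hnfib.of_nonneg_of_le (fun n => norm_nonneg _) fun n => ?_
  rw [← (hfib n).tsum_eq]
  exact norm_tsum_le_tsum_norm (hnorm.prod_factor n)
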